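/- Let $X$ be a Banach space, $A_0$ a bounded linear operator with $\|e^{tA_0}\| \le 1$ for $t \ge 0$, $u: [0,T] \to X$ twice continuously differentiable with $u' = A_0 u + f(t, u(t))$ for a continuous $f$ that is Lipschitz in its second argument, and suppose the one-step map satisfies $\Psi_k(v) = $ solution at time $k$ of $w' = f(t_n + s, w)$, $w(0) = v$, up to error $O(k^{p+1})$ with $p \ge 1$. Define $\bar{v}_n(k) = u(t_n) + kA_0u(t_n) + k^2\varphi_2(kA_0)A_0^2u(t_n)$ and $\bar{u}_{n+1} = \Psi_k(\bar{v}_n(k))$. Then the Lie-Trotter local error satisfies $\|\bar{u}_{n+1} - u(t_{n+1})\| \le Ck^2$ for a constant $C$ independent of $k$ (for $k$ small). -/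

import Mathlib

open NormedSpace intervalIntegral Finset

section Stmt12Aux

variable {X : Type*} [NormedAddCommGroup X] [NormedSpace ℝ X] [CompleteSpace X]

lemma stmt12_hasDerivAt_exp_rev (A0 : X →L[ℝ] X) (k s : ℝ) :
    HasDerivAt (fun s : ℝ => exp ((k - s) • A0)) (-(exp ((k - s) • A0) * A0)) s := by
  have h1 : HasDerivAt (fun s : ℝ => k - s) (-1 : ℝ) s := by
    simpa using (hasDerivAt_id s).const_sub k
  have h := (hasDerivAt_exp_smul_const (𝕂 := ℝ) A0 (k - s)).scomp s h1
  simpa [Function.comp_def] using h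

lemma stmt12_exp_cont (A0 : X →L[ℝ] X) : Continuous (fun s : ℝ => exp (s • A0)) :=
  continuous_iff_continuousAt.2 fun s => (hasDerivAt_exp_smul_const (𝕂 := ℝ) A0 s).continuousAt

lemma stmt12_exp_apply_cont (A0 : X →L[ℝ] X) (g : ℝ → ℝ) (hg : Continuous g) (z : X) :
    Continuous (fun s : ℝ => exp (g s • A0) z) := by
  exact (isBoundedBilinearMap_apply.continuous.comp
    (((stmt12_exp_cont A0).comp hg).prodMk continuous_const))

lemma stmt12_exp_sub_self (A0 : X →L[ℝ] X)
    (hA : ∀ t : ℝ, 0 ≤ t → ‖exp (t • A0)‖ ≤ 1) (x : X) {t : ℝ} (ht : 0 ≤ t) :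
    ‖exp (t • A0) x - x‖ ≤ t * ‖A0 x‖ := by
  have hderiv : ∀ s ∈ Set.uIcc (0:ℝ) t,
      HasDerivAt (fun s : ℝ => exp (s • A0) x) (exp (s • A0) (A0 x)) s := by
    intro s _
    have h := (hasDerivAt_exp_smul_const (𝕂 := ℝ) A0 s).clm_apply (hasDerivAt_const s x)
    simpa [ContinuousLinearMap.mul_apply] using h
  have hint : IntervalIntegrable (fun s : ℝ => exp (s • A0) (A0 x))
      MeasureTheory.volume 0 t :=
    (stmt12_exp_apply_cont A0 id continuous_id (A0 x)).intervalIntegrable _ _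
  have hftc := intervalIntegral.integral_eq_sub_of_hasDerivAt hderiv hint
  have h0 : exp ((0:ℝ) • A0) x = x := by simp
  rw [h0] at hftc
  rw [← hftc]
  have hb := intervalIntegral.norm_integral_le_of_norm_le_const
    (C := ‖A0 x‖) (f := fun s : ℝ => exp (s • A0) (A0 x)) (a := (0:ℝ)) (b := t) ?_
  · calc ‖∫ s in (0:ℝ)..t, exp (s • A0) (A0 x)‖ ≤ ‖A0 x‖ * |t - 0| := hb
    _ = t * ‖A0 x‖ := by rw [sub_zero, abs_of_nonneg ht, mul_comm]
  · intro s hs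
    rw [Set.uIoc_of_le ht] at hs
    calc ‖exp (s • A0) (A0 x)‖ ≤ ‖exp (s • A0)‖ * ‖A0 x‖ :=
          (exp (s • A0)).le_opNorm _
    _ ≤ 1 * ‖A0 x‖ := by
        have := hA s hs.1.le
        exact mul_le_mul_of_nonneg_right this (norm_nonneg _)
    _ = ‖A0 x‖ := one_mul _

lemma stmt12_phi2 (A0 : X →L[ℝ] X) (x : X) {k : ℝ} (hk : 0 ≤ k) :
    (∫ τ in (0:ℝ)..k, τ • exp ((k - τ) • A0)) (A0 (A0 x)) =
      exp (k • A0) x - x - k • A0 x := by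
  have hcont : Continuous (fun τ : ℝ => τ • exp ((k - τ) • A0)) :=
    continuous_id.smul ((stmt12_exp_cont A0).comp (continuous_const.sub continuous_id))
  have hint : IntervalIntegrable (fun τ : ℝ => τ • exp ((k - τ) • A0))
      MeasureTheory.volume 0 k := hcont.intervalIntegrable _ _
  rw [ContinuousLinearMap.intervalIntegral_apply hint]
  -- FTC with G τ = exp((k-τ)•A0) (x + τ • A0 x)
  have hG : ∀ τ ∈ Set.uIcc (0:ℝ) k,
      HasDerivAt (fun τ : ℝ => exp ((k - τ) • A0) (x + τ • A0 x))
        (-(τ • exp ((k - τ) • A0) (A0 (A0 x)))) τ := by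
    intro τ _
    have hc : HasDerivAt (fun τ : ℝ => x + τ • A0 x) (A0 x) τ := by
      simpa using ((hasDerivAt_id τ).smul_const (A0 x)).const_add x
    have h := (stmt12_hasDerivAt_exp_rev A0 k τ).clm_apply hc
    convert h using 1
    simp [ContinuousLinearMap.mul_apply, map_add, map_smul, smul_add, smul_smul]
  have hint2 : IntervalIntegrable (fun τ : ℝ => -(τ • exp ((k - τ) • A0) (A0 (A0 x))))
      MeasureTheory.volume 0 k := by
    apply Continuous.intervalIntegrable
    exact (continuous_id.smul (stmt12_exp_apply_cont A0 (fun τ => k - τ)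
      (continuous_const.sub continuous_id) (A0 (A0 x)))).neg
  have hftc := intervalIntegral.integral_eq_sub_of_hasDerivAt hG hint2
  rw [intervalIntegral.integral_neg] at hftc
  have h2 := neg_eq_iff_eq_neg.mp hftc
  simp only [ContinuousLinearMap.smul_apply]
  rw [h2]
  simp [sub_sub]

lemma stmt12_gronwallBound_le {δ K ε s k : ℝ} (hδ : 0 ≤ δ) (hK : 0 < K) (hε : 0 ≤ ε)
    (hs0 : 0 ≤ s) (hsk : s ≤ k) (hk1 : k ≤ 1) :
    gronwallBound δ K ε s ≤ (δ + ε * k) * Real.exp K := by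
  rw [gronwallBound_of_K_ne_0 hK.ne']
  have hE : Real.exp (K * s) ≤ Real.exp K := Real.exp_le_exp.mpr (by nlinarith)
  have hEpos := Real.exp_pos (K * s)
  have h1 : Real.exp (K * s) - 1 ≤ K * s * Real.exp (K * s) := by
    have h2 := Real.add_one_le_exp (-(K * s))
    have h3 : Real.exp (-(K * s)) = (Real.exp (K * s))⁻¹ := Real.exp_neg _
    rw [h3] at h2
    have h5 : (-(K * s) + 1) * Real.exp (K * s) ≤ 1 := by
      have h6 := mul_le_mul_of_nonneg_right h2 hEpos.le
      rwa [inv_mul_cancel₀ hEpos.ne'] at h6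
    nlinarith [h5]
  have h4 : ε / K * (Real.exp (K * s) - 1) ≤ ε * s * Real.exp (K * s) := by
    calc ε / K * (Real.exp (K * s) - 1) ≤ ε / K * (K * s * Real.exp (K * s)) :=
          mul_le_mul_of_nonneg_left h1 (by positivity)
    _ = ε * s * Real.exp (K * s) := by field_simp
  calc δ * Real.exp (K * s) + ε / K * (Real.exp (K * s) - 1)
      ≤ δ * Real.exp (K * s) + ε * s * Real.exp (K * s) := by linarith
    _ = (δ + ε * s) * Real.exp (K * s) := by ring
    _ ≤ (δ + ε * k) * Real.exp K := by
        apply mul_le_mul (by nlinarith) hE hEpos.le (by nlinarith)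

lemma stmt12_duhamel (A0 : X →L[ℝ] X) (f : ℝ → X → X)
    (hf : Continuous fun p : ℝ × X => f p.1 p.2)
    (u : ℝ → X) (hu : Continuous u) (T : ℝ)
    (hode : ∀ t ∈ Set.Icc (0:ℝ) T, HasDerivAt u (A0 (u t) + f t (u t)) t)
    (tn k : ℝ) (htn : 0 ≤ tn) (hk : 0 ≤ k) (hkT : tn + k ≤ T) :
    ∫ s in (0:ℝ)..k, exp ((k - s) • A0) (f (tn + s) (u (tn + s))) =
      u (tn + k) - exp (k • A0) (u tn) := by
  have hG : ∀ s ∈ Set.uIcc (0:ℝ) k,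
      HasDerivAt (fun s : ℝ => exp ((k - s) • A0) (u (tn + s)))
        (exp ((k - s) • A0) (f (tn + s) (u (tn + s)))) s := by
    intro s hs
    rw [Set.uIcc_of_le hk] at hs
    have hmem : tn + s ∈ Set.Icc (0:ℝ) T := ⟨by linarith [hs.1], by linarith [hs.2]⟩
    have hu' : HasDerivAt (fun s : ℝ => u (tn + s))
        (A0 (u (tn + s)) + f (tn + s) (u (tn + s))) s := by
      have h := (hode _ hmem).scomp s ((hasDerivAt_id s).const_add tn)
      simpa [Function.comp_def] using h
    have h := (stmt12_hasDerivAt_exp_rev A0 k s).clm_apply hu'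
    convert h using 1
    simp [ContinuousLinearMap.mul_apply, map_add]
  have hint : IntervalIntegrable (fun s : ℝ => exp ((k - s) • A0) (f (tn + s) (u (tn + s))))
      MeasureTheory.volume 0 k := by
    apply Continuous.intervalIntegrable
    have hc : Continuous (fun s : ℝ => f (tn + s) (u (tn + s))) :=
      hf.comp ((continuous_const.add continuous_id).prodMk
        (hu.comp (continuous_const.add continuous_id)))
    exact isBoundedBilinearMap_apply.continuous.comp
      (((stmt12_exp_cont A0).comp (continuous_const.sub continuous_id)).prodMk hc)
  have hftc := intervalIntegral.integral_eq_sub_of_hasDerivAt hG hint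
  rw [hftc]
  simp

end Stmt12Aux

set_option maxHeartbeats 2000000 in
/-- Bounded-operator version of the local error bound `O(k²)` for the modified Lie-Trotter
time semidiscretization. -/
theorem stmt_12 {X : Type*} [NormedAddCommGroup X] [NormedSpace ℝ X] [CompleteSpace X]
    (A0 : X →L[ℝ] X)
    (hA : ∀ t : ℝ, 0 ≤ t → ‖NormedSpace.exp (t • A0)‖ ≤ 1)
    (T : ℝ) (hT : 0 < T)
    (f : ℝ → X → X) (L : ℝ)
    (hf : Continuous fun p : ℝ × X => f p.1 p.2)
    (hLip : ∀ t x y, ‖f t x - f t y‖ ≤ L * ‖x - y‖)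
    (u : ℝ → X) (hu2 : ContDiff ℝ 2 u)
    (hode : ∀ t ∈ Set.Icc (0:ℝ) T, HasDerivAt u (A0 (u t) + f t (u t)) t)
    (p : ℕ) (hp : 1 ≤ p)
    (Ψ : ℝ → X → X) (tn : ℝ) (htn : tn ∈ Set.Ico (0:ℝ) T)
    (hΨ : ∃ Cψ k0 : ℝ, 0 < k0 ∧ ∀ k ∈ Set.Ioc (0:ℝ) k0, ∀ v : X, ∀ w : ℝ → X,
      w 0 = v → (∀ s ∈ Set.Icc (0:ℝ) k, HasDerivAt w (f (tn + s) (w s)) s) →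
      ‖Ψ k v - w k‖ ≤ Cψ * k ^ (p + 1)) :
    ∃ C k1 : ℝ, 0 < k1 ∧ ∀ k ∈ Set.Ioc (0:ℝ) k1, tn + k ≤ T →
      ‖Ψ k (u tn + k • A0 (u tn) +
          (∫ τ in (0:ℝ)..k, τ • NormedSpace.exp ((k - τ) • A0)) (A0 (A0 (u tn)))) -
        u (tn + k)‖ ≤ C * k ^ 2 := by
  obtain ⟨Cψ, k0, hk0, hΨb⟩ := hΨ
  have huc : Continuous u := hu2.continuous
  set Lm : ℝ := max L 0 with hLmdef
  have hLm : 0 ≤ Lm := le_max_right _ _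
  have hLip' : ∀ t x y, ‖f t x - f t y‖ ≤ Lm * ‖x - y‖ := fun t x y =>
    (hLip t x y).trans (mul_le_mul_of_nonneg_right (le_max_left _ _) (norm_nonneg _))
  set K : ℝ := Lm + 1 with hKdef
  have hKpos : (0:ℝ) < K := by simp only [hKdef]; linarith
  obtain ⟨Mu, hMu⟩ : ∃ Mu, ∀ t ∈ Set.Icc (0:ℝ) T, ‖A0 (u t)‖ ≤ Mu :=
    isCompact_Icc.exists_bound_of_continuousOn (A0.continuous.comp huc).continuousOn
  have hMu0 : 0 ≤ Mu := (norm_nonneg _).trans (hMu 0 ⟨le_refl 0, hT.le⟩)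
  obtain ⟨Mf, hMf⟩ : ∃ Mf, ∀ t ∈ Set.Icc (0:ℝ) T, ‖f t (u t)‖ ≤ Mf :=
    isCompact_Icc.exists_bound_of_continuousOn
      (hf.comp (continuous_id.prodMk huc)).continuousOn
  have hMf0 : 0 ≤ Mf := (norm_nonneg _).trans (hMf 0 ⟨le_refl 0, hT.le⟩)
  obtain ⟨M1, hM1⟩ : ∃ M1, ∀ t ∈ Set.Icc (tn - 1) (tn + 2), ‖f t (u tn)‖ ≤ M1 :=
    isCompact_Icc.exists_bound_of_continuousOn
      (hf.comp (continuous_id.prodMk continuous_const)).continuousOn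
  have ha : (0:ℝ) ≤ ‖A0 (u tn)‖ := norm_nonneg _
  set a : ℝ := ‖A0 (u tn)‖ with hadef
  have hM1nn : 0 ≤ M1 := (norm_nonneg _).trans (hM1 tn ⟨by linarith, by linarith⟩)
  set M : ℝ := M1 + Lm * (1 + a) with hMdef
  have hM0 : 0 ≤ M := by
    have : 0 ≤ Lm * (1 + a) := mul_nonneg hLm (by linarith)
    simp only [hMdef]; linarith
  set C1 : ℝ := (a + Mu) * Real.exp K with hC1def
  have hC10 : 0 ≤ C1 := mul_nonneg (by linarith) (Real.exp_pos K).le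
  set C2 : ℝ := K * C1 + ‖A0‖ * Mf with hC2def
  refine ⟨max Cψ 0 + C2, min k0 (min 1 (1 / (2 * (M + 1)))), lt_min hk0 (lt_min one_pos (by positivity)), ?_⟩
  intro k hk hkT
  obtain ⟨hkpos, hkle⟩ := hk
  have hk0' : k ≤ k0 := hkle.trans (min_le_left _ _)
  have hk1 : k ≤ 1 := hkle.trans ((min_le_right _ _).trans (min_le_left _ _))
  have hkM : k ≤ 1 / (2 * (M + 1)) := hkle.trans ((min_le_right _ _).trans (min_le_right _ _))
  set x₀ : X := exp (k • A0) (u tn) with hx0def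
  have hveq : u tn + k • A0 (u tn) +
      (∫ τ in (0:ℝ)..k, τ • NormedSpace.exp ((k - τ) • A0)) (A0 (A0 (u tn))) = x₀ := by
    rw [stmt12_phi2 A0 (u tn) hkpos.le]
    simp only [hx0def]
    abel
  rw [hveq]
  have hx0close : ‖x₀ - u tn‖ ≤ k * a :=
    stmt12_exp_sub_self A0 hA (u tn) hkpos.le
  -- Picard–Lindelöf: existence of the flow of the nonlinear part
  have hPL : IsPicardLindelof (fun t x => f (tn + t) x) (tmin := -k) (tmax := 2*k)
      ⟨0, by constructor <;> linarith⟩ x₀ 1 0 M.toNNReal Lm.toNNReal := by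
    refine ⟨?_, ?_, ?_, ?_⟩
    · intro t _
      have hLW : LipschitzWith Lm.toNNReal (fun x => f (tn + t) x) := by
        apply LipschitzWith.of_dist_le_mul
        intro x y
        rw [dist_eq_norm, dist_eq_norm, Real.coe_toNNReal Lm hLm]
        exact hLip' (tn + t) x y
      exact hLW.lipschitzOnWith
    · intro x _
      exact (hf.comp ((continuous_const.add continuous_id).prodMk continuous_const)).continuousOn
    · intro t ht x hx
      have hxball : ‖x - x₀‖ ≤ 1 := by
        have := Metric.mem_closedBall.mp hx; simpa [dist_eq_norm] using this
      have h2 : ‖x - u tn‖ ≤ 1 + a := by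
        have h3 := norm_add_le (x - x₀) (x₀ - u tn)
        rw [sub_add_sub_cancel] at h3
        have : k * a ≤ a := by nlinarith
        linarith
      have hmem : tn + t ∈ Set.Icc (tn - 1) (tn + 2) := ⟨by linarith [ht.1], by linarith [ht.2]⟩
      have h4 : ‖f (tn + t) x‖ ≤ ‖f (tn + t) x - f (tn + t) (u tn)‖ + ‖f (tn + t) (u tn)‖ := by
        have := norm_add_le (f (tn + t) x - f (tn + t) (u tn)) (f (tn + t) (u tn))
        rwa [sub_add_cancel] at this
      have h5 : ‖f (tn + t) x - f (tn + t) (u tn)‖ ≤ Lm * (1 + a) :=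
        (hLip' _ _ _).trans (mul_le_mul_of_nonneg_left h2 hLm)
      have h6 := hM1 _ hmem
      rw [Real.coe_toNNReal _ hM0]
      simp only [hMdef]
      linarith
    · have hmax : max (2*k - 0) (0 - -k) = 2*k := by
        rw [max_eq_left]; all_goals linarith
      rw [Real.coe_toNNReal _ hM0]
      show M * max (2*k - 0) (0 - -k) ≤ 1 - 0
      rw [hmax]
      have h7 : k * (2 * (M + 1)) ≤ 1 := (le_div_iff₀ (by positivity)).mp hkM
      nlinarith
  obtain ⟨w, hw0, hw⟩ := hPL.exists_eq_forall_mem_Icc_hasDerivWithinAt₀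
  replace hw0 : w 0 = x₀ := hw0
  have hwAt : ∀ s ∈ Set.Icc (0:ℝ) k, HasDerivAt w (f (tn + s) (w s)) s := by
    intro s hs
    exact (hw s ⟨by linarith [hs.1], by linarith [hs.2]⟩).hasDerivAt
      (Icc_mem_nhds (by linarith [hs.1]) (by linarith [hs.2]))
  have hwCont : ContinuousOn w (Set.Icc (0:ℝ) k) := fun s hs =>
    ((hwAt s hs).continuousAt).continuousWithinAt
  have huc' : Continuous (fun s : ℝ => u (tn + s)) :=
    huc.comp (continuous_const.add continuous_id)
  have hu'At : ∀ s ∈ Set.Icc (0:ℝ) k, HasDerivAt (fun s : ℝ => u (tn + s))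
      (A0 (u (tn + s)) + f (tn + s) (u (tn + s))) s := by
    intro s hs
    have hmem : tn + s ∈ Set.Icc (0:ℝ) T := ⟨by linarith [hs.1, htn.1], by linarith [hs.2]⟩
    simpa [Function.comp_def] using (hode _ hmem).scomp s ((hasDerivAt_id s).const_add tn)
  -- Gronwall estimate
  have hgron : ∀ s ∈ Set.Icc (0:ℝ) k, ‖w s - u (tn + s)‖ ≤ C1 * k := by
    have hmain := norm_le_gronwallBound_of_norm_deriv_right_le
      (f := fun s => w s - u (tn + s))
      (f' := fun s => f (tn + s) (w s) - (A0 (u (tn + s)) + f (tn + s) (u (tn + s))))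
      (δ := k * a) (K := K) (ε := Mu) (a := 0) (b := k)
      (hwCont.sub huc'.continuousOn)
      (fun s hs => (((hwAt s (Set.Ico_subset_Icc_self hs)).sub
        (hu'At s (Set.Ico_subset_Icc_self hs)))).hasDerivWithinAt)
      (by simpa [hw0] using hx0close)
      (fun s hs => by
        have hsI := Set.Ico_subset_Icc_self hs
        have hmem : tn + s ∈ Set.Icc (0:ℝ) T := ⟨by linarith [hsI.1, htn.1], by linarith [hsI.2]⟩
        show ‖f (tn + s) (w s) - (A0 (u (tn + s)) + f (tn + s) (u (tn + s)))‖ ≤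
          K * ‖w s - u (tn + s)‖ + Mu
        have heq : f (tn + s) (w s) - (A0 (u (tn + s)) + f (tn + s) (u (tn + s))) =
            (f (tn + s) (w s) - f (tn + s) (u (tn + s))) - A0 (u (tn + s)) := by abel
        rw [heq]
        calc ‖(f (tn + s) (w s) - f (tn + s) (u (tn + s))) - A0 (u (tn + s))‖
            ≤ ‖f (tn + s) (w s) - f (tn + s) (u (tn + s))‖ + ‖A0 (u (tn + s))‖ :=
              norm_sub_le _ _
          _ ≤ Lm * ‖w s - u (tn + s)‖ + Mu := add_le_add (hLip' _ _ _) (hMu _ hmem)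
          _ ≤ K * ‖w s - u (tn + s)‖ + Mu := by
              have := norm_nonneg (w s - u (tn + s))
              nlinarith)
    intro s hs
    have h8 := hmain s hs
    rw [sub_zero] at h8
    refine h8.trans ?_
    refine (stmt12_gronwallBound_le (by positivity) hKpos hMu0 hs.1 hs.2 hk1).trans ?_
    have : (k * a + Mu * k) * Real.exp K = C1 * k := by simp only [hC1def]; ring
    exact this.le
  -- FTC for w
  have hfw_cont : ContinuousOn (fun s : ℝ => f (tn + s) (w s)) (Set.Icc (0:ℝ) k) :=
    hf.comp_continuousOn (((continuous_const.add continuous_id).continuousOn).prodMk hwCont)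
  have hintw : IntervalIntegrable (fun s : ℝ => f (tn + s) (w s)) MeasureTheory.volume 0 k := by
    apply ContinuousOn.intervalIntegrable
    rwa [Set.uIcc_of_le hkpos.le]
  have hwFTC : ∫ s in (0:ℝ)..k, f (tn + s) (w s) = w k - w 0 :=
    intervalIntegral.integral_eq_sub_of_hasDerivAt
      (fun s hs => hwAt s (by rwa [Set.uIcc_of_le hkpos.le] at hs)) hintw
  have hDu := stmt12_duhamel A0 f hf u huc T hode tn k htn.1 hkpos.le hkT
  have hintE : IntervalIntegrable
      (fun s : ℝ => exp ((k - s) • A0) (f (tn + s) (u (tn + s))))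
      MeasureTheory.volume 0 k := by
    apply Continuous.intervalIntegrable
    have hc : Continuous (fun s : ℝ => f (tn + s) (u (tn + s))) :=
      hf.comp ((continuous_const.add continuous_id).prodMk huc')
    exact isBoundedBilinearMap_apply.continuous.comp
      (((stmt12_exp_cont A0).comp (continuous_const.sub continuous_id)).prodMk hc)
  have hdiff : w k - u (tn + k) =
      ∫ s in (0:ℝ)..k,
        (f (tn + s) (w s) - exp ((k - s) • A0) (f (tn + s) (u (tn + s)))) := by
    rw [intervalIntegral.integral_sub hintw hintE, hwFTC, hDu, hw0]
    abel
  have hnorm2 : ‖w k - u (tn + k)‖ ≤ C2 * k * k := by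
    rw [hdiff]
    have hb := intervalIntegral.norm_integral_le_of_norm_le_const (C := C2 * k)
      (f := fun s : ℝ => f (tn + s) (w s) - exp ((k - s) • A0) (f (tn + s) (u (tn + s))))
      (a := (0:ℝ)) (b := k) ?_
    · refine hb.trans ?_
      rw [sub_zero, abs_of_nonneg hkpos.le]
    · intro s hs
      rw [Set.uIoc_of_le hkpos.le] at hs
      have hsI : s ∈ Set.Icc (0:ℝ) k := ⟨hs.1.le, hs.2⟩
      have hmem : tn + s ∈ Set.Icc (0:ℝ) T := ⟨by linarith [hsI.1, htn.1], by linarith [hsI.2]⟩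
      have hz := hMf _ hmem
      calc ‖f (tn + s) (w s) - exp ((k - s) • A0) (f (tn + s) (u (tn + s)))‖
          ≤ ‖f (tn + s) (w s) - f (tn + s) (u (tn + s))‖ +
            ‖f (tn + s) (u (tn + s)) - exp ((k - s) • A0) (f (tn + s) (u (tn + s)))‖ :=
            norm_sub_le_norm_sub_add_norm_sub _ _ _
        _ ≤ Lm * (C1 * k) + (k - s) * ‖A0 (f (tn + s) (u (tn + s)))‖ := by
            apply add_le_add
            · exact (hLip' _ _ _).trans (mul_le_mul_of_nonneg_left (hgron s hsI) hLm)
            · rw [norm_sub_rev]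
              exact stmt12_exp_sub_self A0 hA _ (by linarith [hsI.2])
        _ ≤ K * (C1 * k) + k * (‖A0‖ * Mf) := by
            apply add_le_add
            · have h9 : 0 ≤ C1 * k := mul_nonneg hC10 hkpos.le
              nlinarith
            · have h1 : ‖A0 (f (tn + s) (u (tn + s)))‖ ≤ ‖A0‖ * Mf :=
                (A0.le_opNorm _).trans (mul_le_mul_of_nonneg_left hz (norm_nonneg _))
              have h10 := norm_nonneg (A0 (f (tn + s) (u (tn + s))))
              nlinarith [hs.1, hs.2]
        _ = C2 * k := by simp only [hC2def]; ring
  have hΨle : ‖Ψ k x₀ - w k‖ ≤ Cψ * k ^ (p + 1) := hΨb k ⟨hkpos, hk0'⟩ x₀ w hw0 hwAt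
  have hkp : k ^ (p + 1) ≤ k ^ 2 := pow_le_pow_of_le_one hkpos.le hk1 (by omega)
  have hΨle2 : ‖Ψ k x₀ - w k‖ ≤ max Cψ 0 * k ^ 2 := by
    calc ‖Ψ k x₀ - w k‖ ≤ Cψ * k ^ (p + 1) := hΨle
      _ ≤ max Cψ 0 * k ^ (p + 1) :=
          mul_le_mul_of_nonneg_right (le_max_left _ _) (by positivity)
      _ ≤ max Cψ 0 * k ^ 2 := mul_le_mul_of_nonneg_left hkp (le_max_right _ _)
  calc ‖Ψ k x₀ - u (tn + k)‖ ≤ ‖Ψ k x₀ - w k‖ + ‖w k - u (tn + k)‖ :=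
        norm_sub_le_norm_sub_add_norm_sub _ _ _
    _ ≤ max Cψ 0 * k ^ 2 + C2 * k * k := add_le_add hΨle2 hnorm2
    _ = (max Cψ 0 + C2) * k ^ 2 := by ring
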